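/- Let f: R^d → R be self-concordant with minimizer x_* and Hessian H_* = ∇²f(x_*). If ‖x − x_*‖_* < 1 (where ‖v‖_* = √⟨H_* v, v⟩), then the Newton step error at x satisfies ‖x − x_* − H_*⁻¹∇f(x)‖_* ≤ ‖x − x_*‖_*² / (1 − ‖x − x_*‖_*). -/

import Mathlib

open Matrix MeasureTheory Filter
open scoped Classical

noncomputable section

/-- Vectors in `ℝ^d` with the Euclidean (2-)norm. -/
abbrev Vec (d : ℕ) := EuclideanSpace ℝ (Fin d)

/-- Matrix square root of a positive semidefinite matrix (junk value `0` otherwise). -/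
noncomputable def msqrt {d : ℕ} (M : Matrix (Fin d) (Fin d) ℝ) : Matrix (Fin d) (Fin d) ℝ :=
  if h : M.PosSemidef then
    h.1.eigenvectorUnitary.1 * diagonal ((RCLike.ofReal ∘ Real.sqrt ∘ h.1.eigenvalues : Fin d → ℝ)) *
      (star h.1.eigenvectorUnitary : Matrix (Fin d) (Fin d) ℝ) else 0

/-- Frobenius norm of a square matrix. -/
noncomputable def frobNorm {d : ℕ} (M : Matrix (Fin d) (Fin d) ℝ) : ℝ :=
  Real.sqrt (Matrix.trace (Mᵀ * M))

/-- Weighted Frobenius norm `‖W‖_{F(H)} = ‖H^{1/2} W H^{1/2}‖_F`. -/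
noncomputable def wFrob {d : ℕ} (H W : Matrix (Fin d) (Fin d) ℝ) : ℝ :=
  frobNorm (msqrt H * W * msqrt H)

/-- Local norm `‖v‖_H = √⟨H v, v⟩`. -/
noncomputable def localNorm {d : ℕ} (H : Matrix (Fin d) (Fin d) ℝ) (v : Vec d) : ℝ :=
  Real.sqrt (inner ℝ (Matrix.toEuclideanLin H v) v : ℝ)

/-- `f` is self-concordant, expressed through its Hessian map `Hf`:
the Hessian is everywhere positive definite and the local norms at nearby points are
comparable. -/
def SelfConcordant {d : ℕ} (Hf : Vec d → Matrix (Fin d) (Fin d) ℝ) : Prop :=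
  (∀ x, (Hf x).PosDef) ∧
  ∀ x y v : Vec d, localNorm (Hf x) (y - x) < 1 → v ≠ 0 →
    1 - localNorm (Hf x) (y - x) ≤ localNorm (Hf y) v / localNorm (Hf x) v ∧
      localNorm (Hf y) v / localNorm (Hf x) v ≤ 1 / (1 - localNorm (Hf x) (y - x))

/-- `g` is the gradient of `f` and `Hf` is its Hessian (the derivative of the gradient). -/
def IsGradHess {d : ℕ} (f : Vec d → ℝ) (g : Vec d → Vec d)
    (Hf : Vec d → Matrix (Fin d) (Fin d) ℝ) : Prop :=
  (∀ x, HasGradientAt f (g x) x) ∧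
  ∀ x, HasFDerivAt g (Matrix.toEuclideanCLM (𝕜 := ℝ) (Hf x) : Vec d →L[ℝ] Vec d) x

/-- Smallest eigenvalue of a symmetric matrix, via the Rayleigh quotient. -/
noncomputable def lambdaMin {d : ℕ} (M : Matrix (Fin d) (Fin d) ℝ) : ℝ :=
  ⨅ v : {v : Vec d // ‖v‖ = 1}, (inner ℝ (Matrix.toEuclideanLin M v.1) v.1 : ℝ)

/-- Entrywise expectation of a random matrix. -/
noncomputable def expMat {Ω : Type*} [MeasurableSpace Ω] (μ : Measure Ω)
    {m n : ℕ} (M : Ω → Matrix (Fin m) (Fin n) ℝ) : Matrix (Fin m) (Fin n) ℝ :=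
  Matrix.of fun i j => ∫ ω, M ω i j ∂μ

/-- The projection matrix `Z = H^{1/2} S (Sᵀ H S)⁻¹ Sᵀ H^{1/2}`. -/
noncomputable def sketchProj {d τ : ℕ} (H : Matrix (Fin d) (Fin d) ℝ)
    (S : Matrix (Fin d) (Fin τ) ℝ) : Matrix (Fin d) (Fin d) ℝ :=
  msqrt H * S * (Sᵀ * H * S)⁻¹ * Sᵀ * msqrt H

/-- The (randomized) BFGS update
`BFGS(B, H, S) = G + (I - G H) B (I - H G)` with `G = S (Sᵀ H S)⁻¹ Sᵀ`. -/
noncomputable def bfgsUpdate {d τ : ℕ} (B H : Matrix (Fin d) (Fin d) ℝ)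
    (S : Matrix (Fin d) (Fin τ) ℝ) : Matrix (Fin d) (Fin d) ℝ :=
  S * (Sᵀ * H * S)⁻¹ * Sᵀ +
    (1 - S * (Sᵀ * H * S)⁻¹ * Sᵀ * H) * B * (1 - H * (S * (Sᵀ * H * S)⁻¹ * Sᵀ))

/-- Spectral (operator 2-)norm of a matrix. -/
noncomputable def opNorm2 {d : ℕ} (M : Matrix (Fin d) (Fin d) ℝ) : ℝ :=
  ‖(Matrix.toEuclideanCLM (𝕜 := ℝ) M : Vec d →L[ℝ] Vec d)‖

instance matrixMeasurableSpace {m n : Type*} : MeasurableSpace (Matrix m n ℝ) :=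
  MeasurableSpace.pi

/-- The sketching matrices `S k` are i.i.d. samples from a common distribution `D`. -/
def IIDSketch {d τ : ℕ} {Ω : Type*} [MeasurableSpace Ω] (μ : Measure Ω)
    (S : ℕ → Ω → Matrix (Fin d) (Fin τ) ℝ) : Prop :=
  (∀ k, Measurable (S k)) ∧
  ProbabilityTheory.iIndepFun (m := fun _ => matrixMeasurableSpace) S μ ∧
  ∀ k, Measure.map (S k) μ = Measure.map (S 0) μ

end


section Aux

variable {d : ℕ}

lemma inner_teLin (M : Matrix (Fin d) (Fin d) ℝ) (v w : Vec d) :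
    (inner ℝ (Matrix.toEuclideanLin M v) w : ℝ) =
      dotProduct (M.mulVec (WithLp.equiv 2 _ v)) (WithLp.equiv 2 _ w) := by
  simp [PiLp.inner_apply, Matrix.toEuclideanLin_apply, dotProduct, mul_comm]

lemma teLin_symm {M : Matrix (Fin d) (Fin d) ℝ} (hM : M.IsHermitian) (v w : Vec d) :
    (inner ℝ (Matrix.toEuclideanLin M v) w : ℝ) = inner ℝ (Matrix.toEuclideanLin M w) v := by
  have h := (Matrix.isHermitian_iff_isSymmetric.mp hM) v w
  rw [h, real_inner_comm]

lemma teLin_nonneg {M : Matrix (Fin d) (Fin d) ℝ} (hM : M.PosSemidef) (v : Vec d) :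
    0 ≤ (inner ℝ (Matrix.toEuclideanLin M v) v : ℝ) := by
  rw [inner_teLin]
  have := hM.dotProduct_mulVec_nonneg (WithLp.equiv 2 _ v)
  simpa [dotProduct_comm] using this

lemma teLin_pos {M : Matrix (Fin d) (Fin d) ℝ} (hM : M.PosDef) {v : Vec d} (hv : v ≠ 0) :
    0 < (inner ℝ (Matrix.toEuclideanLin M v) v : ℝ) := by
  rw [inner_teLin]
  have hv' : (WithLp.equiv 2 _ v : Fin d → ℝ) ≠ 0 := by simpa using hv
  have := hM.dotProduct_mulVec_pos hv'
  simpa [dotProduct_comm] using this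

lemma localNorm_sq {M : Matrix (Fin d) (Fin d) ℝ} (hM : M.PosSemidef) (v : Vec d) :
    localNorm M v ^ 2 = (inner ℝ (Matrix.toEuclideanLin M v) v : ℝ) :=
  Real.sq_sqrt (teLin_nonneg hM v)

lemma localNorm_nonneg (M : Matrix (Fin d) (Fin d) ℝ) (v : Vec d) :
    0 ≤ localNorm M v := Real.sqrt_nonneg _

lemma localNorm_pos {M : Matrix (Fin d) (Fin d) ℝ} (hM : M.PosDef) {v : Vec d} (hv : v ≠ 0) :
    0 < localNorm M v := Real.sqrt_pos.mpr (teLin_pos hM hv)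

lemma localNorm_smul (M : Matrix (Fin d) (Fin d) ℝ) (t : ℝ) (v : Vec d) :
    localNorm M (t • v) = |t| * localNorm M v := by
  unfold localNorm
  rw [_root_.map_smul, real_inner_smul_left, real_inner_smul_right, ← mul_assoc,
    ← Real.sqrt_sq_eq_abs, ← Real.sqrt_mul (sq_nonneg t), sq]

lemma localNorm_neg (M : Matrix (Fin d) (Fin d) ℝ) (v : Vec d) :
    localNorm M (-v) = localNorm M v := by
  have := localNorm_smul M (-1) v
  simpa using this

lemma expand_quad {A : Matrix (Fin d) (Fin d) ℝ} (hA : A.IsHermitian) (p q : Vec d) (α β : ℝ) :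
    (inner ℝ (Matrix.toEuclideanLin A (α•p + β•q)) (α•p + β•q) : ℝ) =
      α^2 * inner ℝ (Matrix.toEuclideanLin A p) p + 2*α*β* inner ℝ (Matrix.toEuclideanLin A p) q
        + β^2 * inner ℝ (Matrix.toEuclideanLin A q) q := by
  simp only [map_add, _root_.map_smul, inner_add_left, inner_add_right, real_inner_smul_left,
    real_inner_smul_right]
  rw [teLin_symm hA q p]
  ring

lemma bilin_bound {M H : Matrix (Fin d) (Fin d) ℝ} (hM : M.IsHermitian)
    (hHpd : H.PosDef) {c : ℝ} (hc : 0 ≤ c)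
    (hquad : ∀ v : Vec d, |(inner ℝ (Matrix.toEuclideanLin M v) v : ℝ)| ≤
      c * inner ℝ (Matrix.toEuclideanLin H v) v)
    (r u : Vec d) :
    (inner ℝ (Matrix.toEuclideanLin M r) u : ℝ) ≤ c * localNorm H r * localNorm H u := by
  unfold localNorm
  by_cases hr : r = 0
  · simp [hr]
  by_cases hu : u = 0
  · simp [hu]
  have hqrpos : 0 < (inner ℝ (Matrix.toEuclideanLin H r) r : ℝ) := teLin_pos hHpd hr
  have hqupos : 0 < (inner ℝ (Matrix.toEuclideanLin H u) u : ℝ) := teLin_pos hHpd hu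
  set a := Real.sqrt (inner ℝ (Matrix.toEuclideanLin H r) r : ℝ) with ha
  set b := Real.sqrt (inner ℝ (Matrix.toEuclideanLin H u) u : ℝ) with hb
  have hapos : 0 < a := Real.sqrt_pos.mpr hqrpos
  have hbpos : 0 < b := Real.sqrt_pos.mpr hqupos
  have ha2 : a^2 = (inner ℝ (Matrix.toEuclideanLin H r) r : ℝ) := Real.sq_sqrt hqrpos.le
  have hb2 : b^2 = (inner ℝ (Matrix.toEuclideanLin H u) u : ℝ) := Real.sq_sqrt hqupos.le
  have h1 := expand_quad hM r u b a
  have h2 := expand_quad hM r u b (-a)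
  have e1 := expand_quad hHpd.1 r u b a
  have e2 := expand_quad hHpd.1 r u b (-a)
  have g1 := (abs_le.mp (hquad (b•r + a•u))).2
  have g2 := neg_le_of_abs_le (hquad (b•r + (-a)•u))
  rw [h1, e1] at g1
  rw [h2, e2] at g2
  rw [← ha2, ← hb2] at g1 g2
  have key4 : 4*a*b*(inner ℝ (Matrix.toEuclideanLin M r) u : ℝ) ≤ 4*c*(a^2*b^2) := by
    linarith
  nlinarith [key4, mul_pos hapos hbpos]

lemma teCLM_apply (A : Matrix (Fin d) (Fin d) ℝ) (v : Vec d) :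
    (Matrix.toEuclideanCLM (𝕜 := ℝ) A : Vec d →L[ℝ] Vec d) v = Matrix.toEuclideanLin A v := by
  rw [← Matrix.coe_toEuclideanCLM_eq_toEuclideanLin]
  rfl

end Aux

set_option maxHeartbeats 1000000 in
/-- **Newton-step error bound at the optimum for self-concordant `f`.** -/
theorem newton_step_error_self_concordant
    {d : ℕ} (f : Vec d → ℝ) (g : Vec d → Vec d) (Hf : Vec d → Matrix (Fin d) (Fin d) ℝ)
    (hfgH : IsGradHess f g Hf) (hsc : SelfConcordant Hf)
    (xstar : Vec d) (hmin : ∀ y, f xstar ≤ f y)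
    (x : Vec d) (hx : localNorm (Hf xstar) (x - xstar) < 1) :
    localNorm (Hf xstar) (x - xstar - Matrix.toEuclideanLin (Hf xstar)⁻¹ (g x)) ≤
      localNorm (Hf xstar) (x - xstar) ^ 2 / (1 - localNorm (Hf xstar) (x - xstar)) := by
  obtain ⟨hgrad, hhess⟩ := hfgH
  obtain ⟨hpd, hscB⟩ := hsc
  set H : Matrix (Fin d) (Fin d) ℝ := Hf xstar with hH
  have hHpd : H.PosDef := hpd xstar
  set r : Vec d := x - xstar with hrdef
  set lam : ℝ := localNorm H r with hlam
  have hlam0 : 0 ≤ lam := localNorm_nonneg _ _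
  have hlam1 : lam < 1 := hx
  -- the gradient vanishes at the minimizer
  have hg0 : g xstar = 0 := by
    have hloc : IsLocalMin f xstar := Filter.Eventually.of_forall hmin
    have hzero := hloc.hasFDerivAt_eq_zero (hgrad xstar).hasFDerivAt
    have := congrArg (InnerProductSpace.toDual ℝ (Vec d)).symm hzero
    simpa using this
  set e : Vec d := x - xstar - Matrix.toEuclideanLin H⁻¹ (g x) with hedef
  set nu : ℝ := localNorm H e with hnu
  have hnu0 : 0 ≤ nu := localNorm_nonneg _ _
  -- H e = H r - g x
  have hinv : H * H⁻¹ = 1 :=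
    Matrix.mul_nonsing_inv _ (isUnit_iff_ne_zero.mpr hHpd.det_pos.ne')
  have hHe : Matrix.toEuclideanLin H e = Matrix.toEuclideanLin H r - g x := by
    rw [hedef, ← hrdef, map_sub]
    congr 1
    simp [Matrix.toEuclideanLin_apply, Matrix.mulVec_mulVec, hinv, Matrix.one_mulVec]
  -- the curve and its derivative
  set γ : ℝ → Vec d := fun t => xstar + t • r with hγ
  have hγd : ∀ t : ℝ, HasDerivAt γ r t := by
    intro t
    have := ((hasDerivAt_id t).smul_const r).const_add xstar
    rw [one_smul] at this; exact this
  have hφ : ∀ t : ℝ, HasDerivAt (fun s => g (γ s))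
      (Matrix.toEuclideanLin (Hf (γ t)) r) t := by
    intro t
    have := (hhess (γ t)).comp_hasDerivAt t (hγd t)
    simp only [teCLM_apply] at this; exact this
  -- scalar function h
  set h : ℝ → ℝ := fun t => (inner ℝ (t • (Matrix.toEuclideanLin H r) - g (γ t)) e : ℝ) with hhdef
  have hh : ∀ t : ℝ, HasDerivAt h
      ((inner ℝ (Matrix.toEuclideanLin (H - Hf (γ t)) r) e : ℝ)) t := by
    intro t
    have d1 : HasDerivAt (fun s : ℝ => s • (Matrix.toEuclideanLin H r) - g (γ s))
        (Matrix.toEuclideanLin H r - Matrix.toEuclideanLin (Hf (γ t)) r) t := by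
      have := ((hasDerivAt_id t).smul_const (Matrix.toEuclideanLin H r)).sub (hφ t)
      rw [one_smul] at this; exact this
    have d2 := d1.inner ℝ (hasDerivAt_const t e)
    have hMr : Matrix.toEuclideanLin (H - Hf (γ t)) r =
        Matrix.toEuclideanLin H r - Matrix.toEuclideanLin (Hf (γ t)) r := by
      have hms : Matrix.toEuclideanLin (H - Hf (γ t)) =
          Matrix.toEuclideanLin H - Matrix.toEuclideanLin (Hf (γ t)) := map_sub _ _ _
      rw [hms, LinearMap.sub_apply]
    rw [hMr]
    simpa only [inner_zero_right, zero_add, add_zero] using d2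
  -- endpoint values
  have hγ0 : γ 0 = xstar := by simp [hγ]
  have hγ1 : γ 1 = x := by simp [hγ, hrdef]
  have hh0 : h 0 = 0 := by simp [hhdef, hγ0, hg0]
  have hh1 : h 1 = nu ^ 2 := by
    have : h 1 = (inner ℝ (Matrix.toEuclideanLin H e) e : ℝ) := by
      simp [hhdef, hγ1, hHe]
    rw [this, hnu, localNorm_sq hHpd.posSemidef]
  -- derivative bound
  have hubound : ∀ t ∈ Set.Ico (0:ℝ) 1,
      |(inner ℝ (Matrix.toEuclideanLin (H - Hf (γ t)) r) e : ℝ)| ≤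
        nu * (lam / (1 - t*lam)^2 - lam) := by
    intro t ht
    obtain ⟨ht0, ht1⟩ := ht
    have hs0 : 0 ≤ t * lam := mul_nonneg ht0 hlam0
    have hs1 : t * lam < 1 := by nlinarith
    have hsub : γ t - xstar = t • r := by simp [hγ]
    have hdist : localNorm H (γ t - xstar) = t * lam := by
      rw [hsub, localNorm_smul, abs_of_nonneg ht0, hlam]
    set c : ℝ := 1 / (1 - t*lam)^2 - 1 with hc
    have h1s : 0 < 1 - t*lam := by linarith
    have hcpos : 0 ≤ c := by
      rw [hc, sub_nonneg, le_div_iff₀ (by positivity)]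
      nlinarith
    -- quadratic bound
    have hquad : ∀ v : Vec d, |(inner ℝ (Matrix.toEuclideanLin (H - Hf (γ t)) v) v : ℝ)| ≤
        c * inner ℝ (Matrix.toEuclideanLin H v) v := by
      intro v
      by_cases hv : v = 0
      · simp [hv]
      have harg : localNorm H (γ t - xstar) < 1 := by rw [hdist]; exact hs1
      have hratio := hscB xstar (γ t) v harg hv
      rw [← hH] at hratio
      rw [hdist] at hratio
      obtain ⟨hrat1, hrat2⟩ := hratio
      have hvpos : 0 < localNorm H v := localNorm_pos hHpd hv
      have hl : (1 - t*lam) * localNorm H v ≤ localNorm (Hf (γ t)) v := by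
        rw [le_div_iff₀ hvpos] at hrat1
        linarith
      have hu : localNorm (Hf (γ t)) v ≤ localNorm H v / (1 - t*lam) := by
        rw [div_le_div_iff₀ hvpos h1s] at hrat2
        rw [le_div_iff₀ h1s]
        linarith
      have htv0 : 0 ≤ localNorm (Hf (γ t)) v := localNorm_nonneg _ _
      have hq : localNorm H v ^ 2 = (inner ℝ (Matrix.toEuclideanLin H v) v : ℝ) :=
        localNorm_sq hHpd.posSemidef v
      have hqt : localNorm (Hf (γ t)) v ^ 2 =
          (inner ℝ (Matrix.toEuclideanLin (Hf (γ t)) v) v : ℝ) :=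
        localNorm_sq (hpd (γ t)).posSemidef v
      have hql : (1 - t*lam)^2 * (inner ℝ (Matrix.toEuclideanLin H v) v : ℝ) ≤
          (inner ℝ (Matrix.toEuclideanLin (Hf (γ t)) v) v : ℝ) := by
        rw [← hq, ← hqt]
        calc (1 - t*lam)^2 * localNorm H v ^ 2 = ((1 - t*lam) * localNorm H v)^2 := by ring
          _ ≤ localNorm (Hf (γ t)) v ^ 2 :=
              pow_le_pow_left₀ (mul_nonneg h1s.le hvpos.le) hl 2
      have hqu : (inner ℝ (Matrix.toEuclideanLin (Hf (γ t)) v) v : ℝ) ≤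
          (inner ℝ (Matrix.toEuclideanLin H v) v : ℝ) / (1 - t*lam)^2 := by
        rw [← hq, ← hqt]
        calc localNorm (Hf (γ t)) v ^ 2 ≤ (localNorm H v / (1 - t*lam))^2 :=
              pow_le_pow_left₀ htv0 hu 2
          _ = localNorm H v ^ 2 / (1 - t*lam)^2 := by rw [div_pow]
      have hsplit : (inner ℝ (Matrix.toEuclideanLin (H - Hf (γ t)) v) v : ℝ) =
          (inner ℝ (Matrix.toEuclideanLin H v) v : ℝ) -
            (inner ℝ (Matrix.toEuclideanLin (Hf (γ t)) v) v : ℝ) := by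
        have hms2 : Matrix.toEuclideanLin (H - Hf (γ t)) =
            Matrix.toEuclideanLin H - Matrix.toEuclideanLin (Hf (γ t)) := map_sub _ _ _
        rw [hms2, LinearMap.sub_apply, inner_sub_left]
      rw [hsplit, abs_le]
      have hqnn : 0 ≤ (inner ℝ (Matrix.toEuclideanLin H v) v : ℝ) :=
        teLin_nonneg hHpd.posSemidef v
      have hceq2 : (inner ℝ (Matrix.toEuclideanLin H v) v : ℝ) +
          c * (inner ℝ (Matrix.toEuclideanLin H v) v : ℝ) =
          (inner ℝ (Matrix.toEuclideanLin H v) v : ℝ) / (1 - t*lam)^2 := by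
        rw [hc]; ring
      have key : 1 - (1 - t*lam)^2 ≤ c := by
        rw [hc, le_sub_iff_add_le, le_div_iff₀ (by positivity : (0:ℝ) < (1 - t*lam)^2)]
        nlinarith [sq_nonneg (1 - (1 - t*lam)^2)]
      constructor
      · have hqu' : (inner ℝ (Matrix.toEuclideanLin (Hf (γ t)) v) v : ℝ) ≤
            (inner ℝ (Matrix.toEuclideanLin H v) v : ℝ) +
              c * (inner ℝ (Matrix.toEuclideanLin H v) v : ℝ) := by
          rw [hceq2]; exact hqu
        linarith
      · linarith [hql, mul_le_mul_of_nonneg_right key hqnn]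
    have hherm : (H - Hf (γ t)).IsHermitian := hHpd.1.sub (hpd (γ t)).1
    have b1 := bilin_bound hherm hHpd hcpos hquad r e
    have b2 := bilin_bound hherm hHpd hcpos hquad r (-e)
    rw [inner_neg_right, localNorm_neg] at b2
    rw [← hlam, ← hnu] at b1 b2
    rw [abs_le]
    have hceq : c * lam * nu = nu * (lam / (1 - t*lam)^2 - lam) := by
      rw [hc]; ring
    constructor
    · rw [← hceq]; linarith
    · rw [← hceq]; linarith
  -- boundary function
  set B : ℝ → ℝ := fun t => nu * (1/(1 - t*lam) - 1 - t*lam) with hB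
  have hBd : ∀ t ∈ Set.Icc (0:ℝ) 1, HasDerivAt B (nu * (lam / (1 - t*lam)^2 - lam)) t := by
    intro t ht
    have h1s : 0 < 1 - t*lam := by nlinarith [ht.1, ht.2]
    have du : HasDerivAt (fun s : ℝ => 1 - s*lam) (-lam) t := by
      have := ((hasDerivAt_id t).mul_const lam).const_sub 1
      simpa using this
    have dinv : HasDerivAt (fun s : ℝ => 1/(1 - s*lam)) (lam / (1 - t*lam)^2) t := by
      have h2 := du.inv h1s.ne'
      have h3 : (- -lam / (1 - t*lam)^2) = lam / (1 - t*lam)^2 := by ring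
      rw [h3] at h2
      have hfun : (fun s : ℝ => 1/(1 - s*lam)) = (fun s : ℝ => 1 - s*lam)⁻¹ := by
        ext s; simp only [one_div, Pi.inv_apply]
      rw [hfun]; exact h2
    have dlin : HasDerivAt (fun s : ℝ => 1/(1 - s*lam) - 1 - s*lam)
        (lam / (1 - t*lam)^2 - lam) t := by
      have := (dinv.sub_const 1).sub ((hasDerivAt_id t).mul_const lam)
      rw [one_mul] at this
      have hfun : (fun s : ℝ => 1/(1 - s*lam) - 1 - s*lam) =
          (fun x : ℝ => 1 / (1 - x * lam) - 1) - fun y : ℝ => id y * lam := by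
        ext s; simp only [Pi.sub_apply, id]
      rw [hfun]; exact this
    rw [hB]
    exact dlin.const_mul nu
  -- apply the mean value inequality
  have hmvt := image_norm_le_of_norm_deriv_right_le_deriv_boundary'
    (f := h) (a := 0) (b := 1)
    (fun t _ => (hh t).continuousAt.continuousWithinAt)
    (fun t _ => (hh t).hasDerivWithinAt)
    (B := B) (B' := fun t => nu * (lam / (1 - t*lam)^2 - lam))
    (by rw [hh0, hB]; simp)
    (fun t ht => (hBd t ht).continuousAt.continuousWithinAt)
    (fun t ht => (hBd t (Set.mem_Icc_of_Ico ht)).hasDerivWithinAt)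
    (fun t ht => by
      rw [Real.norm_eq_abs]
      exact hubound t ht)
  have hfin := hmvt (Set.right_mem_Icc.mpr zero_le_one)
  rw [hh1, Real.norm_eq_abs, hB] at hfin
  have hfin2 : nu ^ 2 ≤ nu * (lam^2 / (1 - lam)) := by
    have h1lam : (0:ℝ) < 1 - lam := by linarith
    have heq : 1/(1 - 1*lam) - 1 - 1*lam = lam^2/(1 - lam) := by
      field_simp
      ring
    calc nu ^ 2 ≤ |nu ^ 2| := le_abs_self _
      _ ≤ nu * (1/(1 - 1*lam) - 1 - 1*lam) := hfin
      _ = nu * (lam^2/(1 - lam)) := by rw [heq]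
  -- conclude
  have hgoal : nu ≤ lam^2 / (1 - lam) := by
    rcases eq_or_lt_of_le hnu0 with hz | hp
    · rw [← hz]
      have h1lam : (0:ℝ) < 1 - lam := by linarith
      positivity
    · nlinarith [hfin2]
  exact hgoal
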